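/- Let ε̂ > 0 be a real number. For each natural number Z ≥ 1, let r_Z be the unique real number in (0,1) satisfying (1−r_Z)^(Z+1) = ε̂·((Z+1)^(Z+1)/Z^Z)·r_Z. Then r_{Z+1} < r_Z; that is, the maximum allowable stability number on the stability border strictly decreases as the degree of nonlinearity Z increases. -/

import Mathlib

/-- Bernoulli-type bound: for `x ≥ 1`, `x^(k+1) - k·x^k ≤ (x-1)^k · x`. -/
lemma stmt_13_bern (x : ℝ) (hx : 1 ≤ x) (k : ℕ) :
    x ^ (k + 1) - k * x ^ k ≤ (x - 1) ^ k * x := by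
  have hx0 : (0:ℝ) < x := by linarith
  have hx1 : 1/x ≤ 1 := by rw [div_le_one hx0]; exact hx
  have h := one_add_mul_le_pow (a := -1/x) (by rw [neg_div]; linarith) k
  have h2 : (1 + -1/x) = (x - 1)/x := by field_simp; ring
  rw [h2, div_pow] at h
  have hxk : (0:ℝ) < x ^ k := pow_pos hx0 k
  calc x ^ (k+1) - k * x ^ k = (1 + k * (-1/x)) * (x ^ k * x) := by
        field_simp; ring
    _ ≤ ((x-1)^k / x^k) * (x ^ k * x) :=
        mul_le_mul_of_nonneg_right h (by positivity)
    _ = (x-1)^k * x := by field_simp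

/-- Key inequality: `(n+1)^(2Z+2) ≤ (n+2)^(Z+2) · n^Z` for `n = Z ≥ 1`. -/
lemma stmt_13_key (Z : ℕ) (hZ : 1 ≤ Z) :
    ((Z:ℝ) + 1) ^ (2*Z + 2) ≤ ((Z:ℝ) + 2) ^ (Z + 2) * (Z:ℝ) ^ Z := by
  set n : ℝ := (Z:ℝ) with hn
  have hn1 : (1:ℝ) ≤ n := by rw [hn]; exact_mod_cast hZ
  set a : ℝ := n^2 + 2*n with ha
  have ha1 : (1:ℝ) ≤ a := by nlinarith
  have ha0 : (0:ℝ) < a := by linarith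
  have haZ : 0 < a - n := by nlinarith
  -- (a-1)^Z * a ≥ a^Z * (a - n)
  have h1 : a ^ Z * (a - n) ≤ (a - 1) ^ Z * a := by
    have := stmt_13_bern a ha1 Z
    have hcast : (Z:ℝ) = n := rfl
    calc a ^ Z * (a - n) = a ^ (Z+1) - (Z:ℝ) * a ^ Z := by rw [hcast]; ring
      _ ≤ (a - 1) ^ Z * a := this
  -- (a+1)^Z * (a-1)^Z ≤ a^(2Z)
  have h2 : (a + 1) ^ Z * (a - 1) ^ Z ≤ (a ^ 2) ^ Z := by
    rw [← mul_pow]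
    apply pow_le_pow_left₀ (by nlinarith)
    nlinarith
  -- (a+1)^Z * (a - n) ≤ a^(Z+1)
  have h3 : (a + 1) ^ Z * (a - n) ≤ a ^ (Z + 1) := by
    have hap : (0:ℝ) < (a+1)^Z := by positivity
    have hap0 : (0:ℝ) ≤ a + 1 := by linarith
    have hc : (a + 1) ^ Z * (a ^ Z * (a - n)) ≤ a ^ (2*Z) * a := by
      calc (a + 1) ^ Z * (a ^ Z * (a - n)) ≤ (a + 1) ^ Z * ((a - 1) ^ Z * a) := by
            apply mul_le_mul_of_nonneg_left h1 (le_of_lt hap)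
        _ = ((a + 1) ^ Z * (a - 1) ^ Z) * a := by ring
        _ ≤ (a ^ 2) ^ Z * a := mul_le_mul_of_nonneg_right h2 (le_of_lt ha0)
        _ = a ^ (2*Z) * a := by rw [← pow_mul]
    have hpow : (0:ℝ) < a ^ Z := pow_pos ha0 Z
    have : (a + 1) ^ Z * (a - n) * a ^ Z ≤ a ^ (Z + 1) * a ^ Z := by
      calc (a + 1) ^ Z * (a - n) * a ^ Z = (a + 1) ^ Z * (a ^ Z * (a - n)) := by ring
        _ ≤ a ^ (2*Z) * a := hc
        _ = a ^ (Z + 1) * a ^ Z := by rw [← pow_succ, ← pow_add]; congr 1; omega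
    exact le_of_mul_le_mul_right this hpow
  -- linear comparison: n*(a+1) ≤ (n+2)*(a-n)
  have h4 : n * (a + 1) ≤ (n + 2) * (a - n) := by nlinarith
  -- conclude (a+1)^(Z+1) ≤ a^Z * (n+2)^2
  have h5 : (a + 1) ^ (Z + 1) ≤ a ^ Z * (n + 2) ^ 2 := by
    have hn0 : (0:ℝ) < n := by linarith
    have h6 : (a + 1) ^ (Z + 1) * (a - n) ≤ (a + 1) * a ^ (Z + 1) := by
      calc (a + 1) ^ (Z + 1) * (a - n) = (a + 1) * ((a + 1) ^ Z * (a - n)) := by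
            rw [pow_succ]; ring
        _ ≤ (a + 1) * a ^ (Z + 1) := by
            apply mul_le_mul_of_nonneg_left h3 (by linarith)
    have h7 : (a + 1) * a ^ (Z + 1) * n ≤ a ^ Z * (n + 2) ^ 2 * (a - n) * n := by
      have haeq : a ^ (Z + 1) = a ^ Z * (n * (n + 2)) := by
        rw [pow_succ, ha]; ring
      have hz : (0:ℝ) ≤ a ^ Z * (n + 2) := by positivity
      calc (a + 1) * a ^ (Z + 1) * n = (a ^ Z * (n + 2)) * (n * (a + 1)) * n := by
            rw [haeq]; ring
        _ ≤ (a ^ Z * (n + 2)) * ((n + 2) * (a - n)) * n := by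
            apply mul_le_mul_of_nonneg_right _ (le_of_lt hn0)
            exact mul_le_mul_of_nonneg_left h4 hz
        _ = a ^ Z * (n + 2) ^ 2 * (a - n) * n := by ring
    have h8 : (a + 1) ^ (Z + 1) * ((a - n) * n) ≤ a ^ Z * (n + 2) ^ 2 * ((a - n) * n) := by
      calc (a + 1) ^ (Z + 1) * ((a - n) * n) = (a + 1) ^ (Z + 1) * (a - n) * n := by ring
        _ ≤ (a + 1) * a ^ (Z + 1) * n := mul_le_mul_of_nonneg_right h6 (le_of_lt hn0)
        _ ≤ a ^ Z * (n + 2) ^ 2 * (a - n) * n := h7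
        _ = a ^ Z * (n + 2) ^ 2 * ((a - n) * n) := by ring
    exact le_of_mul_le_mul_right h8 (by positivity)
  -- rewrite
  calc (n + 1) ^ (2*Z + 2) = ((n + 1)^2) ^ (Z + 1) := by rw [← pow_mul]; congr 1
    _ = (a + 1) ^ (Z + 1) := by rw [ha]; ring
    _ ≤ a ^ Z * (n + 2) ^ 2 := h5
    _ = (n * (n + 2)) ^ Z * (n + 2) ^ 2 := by rw [ha]; ring
    _ = (n + 2) ^ (Z + 2) * n ^ Z := by
        rw [mul_pow, pow_add]; ring

/-- `ehat` denotes the combined perturbation amplitude ε̂ = ε·u0^Z.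
`rZ` and `rZ'` are the unique roots in (0,1) of the stability-border equations
for nonlinearity degrees `Z` and `Z+1` respectively. -/
theorem stmt_13 (ehat : ℝ) (hε : 0 < ehat) (Z : ℕ) (hZ : 1 ≤ Z)
    (rZ rZ' : ℝ)
    (hrZ0 : 0 < rZ) (hrZ1 : rZ < 1)
    (hrZ : (1 - rZ) ^ (Z + 1) = ehat * (((Z : ℝ) + 1) ^ (Z + 1) / (Z : ℝ) ^ Z) * rZ)
    (hrZ'0 : 0 < rZ') (hrZ'1 : rZ' < 1)
    (hrZ' : (1 - rZ') ^ (Z + 2) =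
      ehat * (((Z : ℝ) + 2) ^ (Z + 2) / ((Z : ℝ) + 1) ^ (Z + 1)) * rZ') :
    rZ' < rZ := by
  set n : ℝ := (Z:ℝ) with hn
  have hn1 : (1:ℝ) ≤ n := by rw [hn]; exact_mod_cast hZ
  have hnZ : (0:ℝ) < n ^ Z := pow_pos (by linarith) Z
  have hn1Z : (0:ℝ) < (n + 1) ^ (Z + 1) := pow_pos (by linarith) _
  set c : ℝ := ehat * ((n + 1) ^ (Z + 1) / n ^ Z) with hc
  set c' : ℝ := ehat * ((n + 2) ^ (Z + 2) / (n + 1) ^ (Z + 1)) with hc'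
  have hcc' : c ≤ c' := by
    rw [hc, hc']
    apply mul_le_mul_of_nonneg_left _ (le_of_lt hε)
    rw [div_le_div_iff₀ hnZ hn1Z]
    calc (n + 1) ^ (Z + 1) * (n + 1) ^ (Z + 1) = (n + 1) ^ (2*Z + 2) := by
          rw [← pow_add]; congr 1; omega
      _ ≤ (n + 2) ^ (Z + 2) * n ^ Z := stmt_13_key Z hZ
  have hcpos : 0 < c := by
    rw [hc]; positivity
  have hc'pos : 0 < c' := by
    rw [hc']; positivity
  have hr1 : 0 < 1 - rZ' := by linarith
  -- strict bound: c * rZ' < (1 - rZ')^(Z+1)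
  have hstrict : c * rZ' < (1 - rZ') ^ (Z + 1) := by
    have heq : (1 - rZ') ^ (Z + 1) * (1 - rZ') = c' * rZ' := by
      rw [← pow_succ]; exact hrZ'
    have h1 : c * rZ' ≤ c' * rZ' := mul_le_mul_of_nonneg_right hcc' (le_of_lt hrZ'0)
    have h2 : c' * rZ' < (1 - rZ') ^ (Z + 1) := by
      rw [← heq]
      have hp : 0 < (1 - rZ') ^ (Z + 1) := pow_pos hr1 _
      nlinarith
    linarith
  by_contra hcon
  push_neg at hcon  -- rZ ≤ rZ'
  have hmono : (1 - rZ') ^ (Z + 1) ≤ (1 - rZ) ^ (Z + 1) :=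
    pow_le_pow_left₀ (le_of_lt hr1) (by linarith) _
  have : c * rZ ≤ c * rZ' := mul_le_mul_of_nonneg_left hcon (le_of_lt hcpos)
  rw [hrZ] at hmono
  linarith
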